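/- Let L_{j−1}, L_j, L_{j+1} be hyperbolic difference operators (with nowhere-vanishing a- and b-coefficients) such that L_j is a Laplace transform of L_{j−1} and L_{j+1} is a Laplace transform of L_j, and denote their Laplace invariants by k_{j−1}, h_{j−1}, k_j, h_j, k_{j+1}, h_{j+1}. Then k_{j+1}(n,m) = h_j(n,m) and k_j(n,m) = h_{j−1}(n,m) for all (n,m), and the purely discrete two-dimensional Toda lattice identity holds: h_j(n+1,m)·h_j(n,m−1)·(1 + h_j(n,m))·(1 + h_j(n+1,m−1)) = h_j(n,m)·h_j(n+1,m−1)·(1 + h_{j+1}(n,m))·(1 + h_{j−1}(n+1,m−1)) for all (n,m). -/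

import Mathlib

noncomputable section

/-- The hyperbolic difference operator with coefficients `a`, `b`, `c`:
`(Lψ)(n,m) = ψ(n+1,m+1) + a(n,m)ψ(n+1,m) + b(n,m)ψ(n,m+1) + c(n,m)ψ(n,m)`. -/
def Lop (a b c : ℤ → ℤ → ℂ) (ψ : ℤ → ℤ → ℂ) : ℤ → ℤ → ℂ :=
  fun n m => ψ (n + 1) (m + 1) + a n m * ψ (n + 1) m + b n m * ψ n (m + 1) + c n m * ψ n m

/-- The Laplace invariant `k(n,m) = c(n,m)/(a(n-1,m)b(n,m)) - 1`. -/
def kInv (a b c : ℤ → ℤ → ℂ) : ℤ → ℤ → ℂ :=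
  fun n m => c n m / (a (n - 1) m * b n m) - 1

/-- The Laplace invariant `h(n,m) = c(n,m)/(a(n,m)b(n,m-1)) - 1`. -/
def hInv (a b c : ℤ → ℤ → ℂ) : ℤ → ℤ → ℂ :=
  fun n m => c n m / (a n m * b n (m - 1)) - 1

/-- The operator `(Dψ)(n,m) = ψ(n+1,m) + b(n,m-1)ψ(n,m)`. -/
def Dop (b : ℤ → ℤ → ℂ) (ψ : ℤ → ℤ → ℂ) : ℤ → ℤ → ℂ :=
  fun n m => ψ (n + 1) m + b n (m - 1) * ψ n m

/-- `L̂` (coefficients `a' b' c'`) is a Laplace transform of `L` (coefficients `a b c`). -/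
def IsLaplaceTransform (a' b' c' a b c : ℤ → ℤ → ℂ) : Prop :=
  ∃ q : ℤ → ℤ → ℂ, ∀ ψ : ℤ → ℤ → ℂ, ∀ n m : ℤ,
    Lop a' b' c' (Dop b ψ) n m = Lop a b c ψ (n + 1) m + q n m * Lop a b c ψ n m

lemma extract (a' b' c' a b c : ℤ → ℤ → ℂ) (h : IsLaplaceTransform a' b' c' a b c)
    (n m : ℤ) :
    a' n m = a (n + 1) m ∧
    c' n m * b n (m - 1) = b' n m * c n m ∧
    a' n m * b (n + 1) (m - 1) + c' n m = c (n + 1) m + b' n m * a n m := by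
  obtain ⟨q, hq⟩ := h
  have h1 := hq (fun x y => if x = n + 2 ∧ y = m then 1 else 0) n m
  have h2 := hq (fun x y => if x = n + 1 ∧ y = m + 1 then 1 else 0) n m
  have h3 := hq (fun x y => if x = n ∧ y = m then 1 else 0) n m
  have h4 := hq (fun x y => if x = n + 1 ∧ y = m then 1 else 0) n m
  simp only [Lop, Dop] at h1 h2 h3 h4
  norm_num at h1 h2 h3 h4
  have e1 : n + 1 + 1 = n + 2 := by ring
  have e2 : n + 1 + 1 ≠ n := by omega
  rw [if_pos e1, if_pos e1] at h1
  rw [if_neg e2, if_neg e2] at h3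
  norm_num at h3
  exact ⟨h1, by rw [h2]; exact h3, by rw [h2]; exact h4⟩

lemma kh (a' b' c' a b c : ℤ → ℤ → ℂ)
    (ha : ∀ n m, a n m ≠ 0) (hb : ∀ n m, b n m ≠ 0) (hb' : ∀ n m, b' n m ≠ 0)
    (h : IsLaplaceTransform a' b' c' a b c) (n m : ℤ) :
    kInv a' b' c' n m = hInv a b c n m := by
  obtain ⟨hr1, hr2, -⟩ := extract a' b' c' a b c h n m
  obtain ⟨hr1', -, -⟩ := extract a' b' c' a b c h (n - 1) m
  rw [show n - 1 + 1 = n by ring] at hr1'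
  unfold kInv hInv
  rw [hr1']
  have h1 := ha n m
  have h2 := hb n (m - 1)
  have h3 := hb' n m
  field_simp
  linear_combination hr2

lemma keyE (a' b' c' a b c : ℤ → ℤ → ℂ)
    (h : IsLaplaceTransform a' b' c' a b c) (n m : ℤ) :
    b' n m * (c n m - a n m * b n (m - 1)) =
      (c (n + 1) m - a (n + 1) m * b (n + 1) (m - 1)) * b n (m - 1) := by
  obtain ⟨hr1, hr2, hr3⟩ := extract a' b' c' a b c h n m
  linear_combination (-1 : ℂ) * hr2 + b n (m - 1) * hr3 - b n (m - 1) * b (n + 1) (m - 1) * hr1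

lemma hzero (a b c : ℤ → ℤ → ℂ) (n m : ℤ)
    (ha : a n m ≠ 0) (hb : b n (m - 1) ≠ 0)
    (h : c n m - a n m * b n (m - 1) = 0) : hInv a b c n m = 0 := by
  unfold hInv
  rw [sub_eq_zero.mp h, mul_comm (a n m)]
  field_simp
  norm_num


set_option maxHeartbeats 2000000 in
/-- Laplace invariants of three consecutive operators in a Laplace series
satisfy `k_{j+1} = h_j`, `k_j = h_{j-1}` and the purely discrete 2D Toda lattice identity. -/
theorem stmt3 (a₀ b₀ c₀ a₁ b₁ c₁ a₂ b₂ c₂ : ℤ → ℤ → ℂ)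
    (ha₀ : ∀ n m, a₀ n m ≠ 0) (hb₀ : ∀ n m, b₀ n m ≠ 0)
    (ha₁ : ∀ n m, a₁ n m ≠ 0) (hb₁ : ∀ n m, b₁ n m ≠ 0)
    (ha₂ : ∀ n m, a₂ n m ≠ 0) (hb₂ : ∀ n m, b₂ n m ≠ 0)
    (h01 : IsLaplaceTransform a₁ b₁ c₁ a₀ b₀ c₀)
    (h12 : IsLaplaceTransform a₂ b₂ c₂ a₁ b₁ c₁) :
    (∀ n m, kInv a₂ b₂ c₂ n m = hInv a₁ b₁ c₁ n m) ∧
    (∀ n m, kInv a₁ b₁ c₁ n m = hInv a₀ b₀ c₀ n m) ∧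
    (∀ n m : ℤ,
      hInv a₁ b₁ c₁ (n + 1) m * hInv a₁ b₁ c₁ n (m - 1) *
        (1 + hInv a₁ b₁ c₁ n m) * (1 + hInv a₁ b₁ c₁ (n + 1) (m - 1)) =
      hInv a₁ b₁ c₁ n m * hInv a₁ b₁ c₁ (n + 1) (m - 1) *
        (1 + hInv a₂ b₂ c₂ n m) * (1 + hInv a₀ b₀ c₀ (n + 1) (m - 1))) := by
  refine ⟨fun n m => kh _ _ _ _ _ _ ha₁ hb₁ hb₂ h12 n m,
          fun n m => kh _ _ _ _ _ _ ha₀ hb₀ hb₁ h01 n m, fun n m => ?_⟩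
  have E1 := keyE a₂ b₂ c₂ a₁ b₁ c₁ h12 n m
  have E2 := keyE a₂ b₂ c₂ a₁ b₁ c₁ h12 n (m - 1)
  by_cases hH : c₁ n m - a₁ n m * b₁ n (m - 1) = 0
  · -- then H(n+1,m) = 0 too; both sides vanish
    have hH' : c₁ (n + 1) m - a₁ (n + 1) m * b₁ (n + 1) (m - 1) = 0 := by
      rw [hH, mul_zero] at E1
      exact (mul_eq_zero.mp E1.symm).resolve_right (hb₁ n (m - 1))
    rw [hzero a₁ b₁ c₁ (n + 1) m (ha₁ _ _) (hb₁ _ _) hH',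
        hzero a₁ b₁ c₁ n m (ha₁ _ _) (hb₁ _ _) hH]
    ring
  by_cases hH2 : c₁ n (m - 1) - a₁ n (m - 1) * b₁ n (m - 1 - 1) = 0
  · have hH2' : c₁ (n + 1) (m - 1) - a₁ (n + 1) (m - 1) * b₁ (n + 1) (m - 1 - 1) = 0 := by
      rw [hH2, mul_zero] at E2
      exact (mul_eq_zero.mp E2.symm).resolve_right (hb₁ n (m - 1 - 1))
    rw [hzero a₁ b₁ c₁ n (m - 1) (ha₁ _ _) (hb₁ _ _) hH2,
        hzero a₁ b₁ c₁ (n + 1) (m - 1) (ha₁ _ _) (hb₁ _ _) hH2']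
    ring
  -- main case
  have hH3 : c₁ (n + 1) (m - 1) - a₁ (n + 1) (m - 1) * b₁ (n + 1) (m - 1 - 1) ≠ 0 := by
    intro h0
    rw [h0, zero_mul] at E2
    exact (mul_ne_zero (hb₂ n (m - 1)) hH2) E2
  obtain ⟨r1, r2, -⟩ := extract a₂ b₂ c₂ a₁ b₁ c₁ h12 n m
  have hc2H : c₂ n m * (c₁ n m - a₁ n m * b₁ n (m - 1)) =
      c₁ n m * (c₁ (n + 1) m - a₁ (n + 1) m * b₁ (n + 1) (m - 1)) := by
    have := mul_left_cancel₀ (hb₁ n (m - 1))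
      (show b₁ n (m - 1) * (c₂ n m * (c₁ n m - a₁ n m * b₁ n (m - 1))) =
            b₁ n (m - 1) * (c₁ n m * (c₁ (n + 1) m - a₁ (n + 1) m * b₁ (n + 1) (m - 1))) by
        linear_combination (c₁ n m - a₁ n m * b₁ n (m - 1)) * r2 + c₁ n m * E1)
    exact this
  have h2exp : 1 + hInv a₂ b₂ c₂ n m =
      ((c₁ (n + 1) m - a₁ (n + 1) m * b₁ (n + 1) (m - 1)) * c₁ n m *
        (c₁ n (m - 1) - a₁ n (m - 1) * b₁ n (m - 1 - 1))) /
      ((c₁ n m - a₁ n m * b₁ n (m - 1)) * a₁ (n + 1) m *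
        (c₁ (n + 1) (m - 1) - a₁ (n + 1) (m - 1) * b₁ (n + 1) (m - 1 - 1)) * b₁ n (m - 1 - 1)) := by
    unfold hInv
    rw [r1]
    rw [show ∀ x : ℂ, 1 + (x - 1) = x from fun x => by ring]
    rw [div_eq_div_iff (mul_ne_zero (ha₁ _ _) (hb₂ _ _))
      (mul_ne_zero (mul_ne_zero (mul_ne_zero hH (ha₁ _ _)) hH3) (hb₁ _ _))]
    linear_combination (a₁ (n + 1) m * (c₁ (n + 1) (m - 1) - a₁ (n + 1) (m - 1) * b₁ (n + 1) (m - 1 - 1)) *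
        b₁ n (m - 1 - 1)) * hc2H -
      (c₁ n m * (c₁ (n + 1) m - a₁ (n + 1) m * b₁ (n + 1) (m - 1)) * a₁ (n + 1) m) * E2
  have h0exp : 1 + hInv a₀ b₀ c₀ (n + 1) (m - 1) =
      c₁ (n + 1) (m - 1) / (a₁ n (m - 1) * b₁ (n + 1) (m - 1)) := by
    rw [← kh a₁ b₁ c₁ a₀ b₀ c₀ ha₀ hb₀ hb₁ h01 (n + 1) (m - 1)]
    unfold kInv
    rw [show (n : ℤ) + 1 - 1 = n by ring]
    ring
  have hrw1 : ∀ p q : ℤ, 1 + hInv a₁ b₁ c₁ p q = c₁ p q / (a₁ p q * b₁ p (q - 1)) := by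
    intro p q; unfold hInv; ring
  have hrw : ∀ p q : ℤ, hInv a₁ b₁ c₁ p q =
      (c₁ p q - a₁ p q * b₁ p (q - 1)) / (a₁ p q * b₁ p (q - 1)) := by
    intro p q; unfold hInv
    rw [div_sub_one (mul_ne_zero (ha₁ p q) (hb₁ p (q - 1)))]
  rw [h2exp, h0exp, hrw1 n m, hrw1 (n + 1) (m - 1)]
  simp only [hrw]
  simp only [div_mul_div_comm]
  rw [div_eq_div_iff]
  · ring
  · apply_rules [mul_ne_zero] <;> first | exact ha₁ _ _ | exact hb₁ _ _
  · apply_rules [mul_ne_zero] <;>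
      first | exact hH | exact hH3 | exact ha₁ _ _ | exact hb₁ _ _
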